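/- Let W be a Markov generator on n ≥ 3 states, W^st the stalling generator obtained by zeroing the (1,2) and (2,1) off-diagonal entries and adjusting the diagonal so column sums remain zero, and p^st > 0 a steady state of W^st with P_st = diag(p^st). Define W̃ := W − W^st + P_st (W^st)ᵀ P_st⁻¹. Then W̃ is a Markov generator: its off-diagonal entries are nonnegative, its columns sum to zero, and its diagonal entries coincide with those of W. -/
import Mathlib

/-- Theorem 2: the hidden time-reversal operator
`W̃ = W − Wst + Pst Wstᵀ Pst⁻¹` is a genuine Markov generator: nonnegative
off-diagonal entries, zero column sums, and the same diagonal as `W`.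
States `1,2` are indices `0,1`. -/
theorem HTR_is_generator {m : ℕ}
    (W Wst : Matrix (Fin (m + 3)) (Fin (m + 3)) ℝ)
    (hoff : ∀ i j : Fin (m + 3), i ≠ j → 0 ≤ W i j)
    (hcol : ∀ j : Fin (m + 3), ∑ i : Fin (m + 3), W i j = 0)
    (h12 : Wst 0 1 = 0) (h21 : Wst 1 0 = 0)
    (h11 : Wst 0 0 = W 0 0 + W 1 0) (h22 : Wst 1 1 = W 1 1 + W 0 1)
    (hother : ∀ i j : Fin (m + 3),
      ¬((i = 0 ∧ j = 1) ∨ (i = 1 ∧ j = 0) ∨ (i = 0 ∧ j = 0) ∨ (i = 1 ∧ j = 1)) →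
      Wst i j = W i j)
    (pst : Fin (m + 3) → ℝ) (hpst : ∀ i, 0 < pst i)
    (hsteady : Wst.mulVec pst = 0) :
    (∀ i j : Fin (m + 3), i ≠ j → 0 ≤
      (W - Wst + Matrix.diagonal pst * Wst.transpose *
        Matrix.diagonal (fun i => (pst i)⁻¹)) i j) ∧
    (∀ j : Fin (m + 3), ∑ i : Fin (m + 3),
      (W - Wst + Matrix.diagonal pst * Wst.transpose *
        Matrix.diagonal (fun i => (pst i)⁻¹)) i j = 0) ∧
    (∀ i : Fin (m + 3),
      (W - Wst + Matrix.diagonal pst * Wst.transpose *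
        Matrix.diagonal (fun i => (pst i)⁻¹)) i i = W i i) := by
  have entry : ∀ i j : Fin (m + 3),
      (W - Wst + Matrix.diagonal pst * Wst.transpose *
        Matrix.diagonal (fun i => (pst i)⁻¹)) i j
      = W i j - Wst i j + pst i * Wst j i * (pst j)⁻¹ := by
    intro i j
    simp [Matrix.add_apply, Matrix.sub_apply, Matrix.mul_diagonal,
      Matrix.diagonal_mul, Matrix.transpose_apply, mul_assoc]
  have hne0 : ∀ i : Fin (m + 1), (i.succ.succ : Fin (m + 3)) ≠ 0 :=
    fun i => Fin.succ_ne_zero _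
  have hne1 : ∀ i : Fin (m + 1), (i.succ.succ : Fin (m + 3)) ≠ 1 := by
    intro i h
    rw [show (1 : Fin (m + 3)) = Fin.succ 0 from rfl] at h
    exact Fin.succ_ne_zero _ (Fin.succ_injective _ h)
  have honeq : (1 : Fin (m + 3)) = Fin.succ 0 := rfl
  -- column sums of Wst are zero
  have hcolst : ∀ j : Fin (m + 3), ∑ i : Fin (m + 3), Wst i j = 0 := by
    intro j
    by_cases hj0 : j = 0
    · subst hj0
      have h1 := hcol 0
      rw [Fin.sum_univ_succ, Fin.sum_univ_succ] at h1 ⊢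
      have htail : ∀ i : Fin (m + 1), Wst i.succ.succ 0 = W i.succ.succ 0 := by
        intro i
        apply hother
        rintro (⟨h, -⟩ | ⟨h, -⟩ | ⟨h, -⟩ | ⟨h, -⟩) <;>
          [exact hne0 i h; exact hne1 i h; exact hne0 i h; exact hne1 i h]
      rw [Finset.sum_congr rfl (fun i _ => htail i), ← honeq, h11, h21, ← honeq] at *
      linarith
    · by_cases hj1 : j = 1
      · subst hj1
        have h1 := hcol 1
        rw [Fin.sum_univ_succ, Fin.sum_univ_succ] at h1 ⊢
        have htail : ∀ i : Fin (m + 1), Wst i.succ.succ 1 = W i.succ.succ 1 := by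
          intro i
          apply hother
          rintro (⟨h, -⟩ | ⟨h, -⟩ | ⟨h, -⟩ | ⟨h, -⟩) <;>
            [exact hne0 i h; exact hne1 i h; exact hne0 i h; exact hne1 i h]
        rw [Finset.sum_congr rfl (fun i _ => htail i), ← honeq, h12, h22, ← honeq] at *
        linarith
      · have heq : ∀ i : Fin (m + 3), Wst i j = W i j := by
          intro i
          apply hother
          rintro (⟨-, h⟩ | ⟨-, h⟩ | ⟨-, h⟩ | ⟨-, h⟩) <;>
            [exact hj1 h; exact hj0 h; exact hj0 h; exact hj1 h]
        simp only [heq]; exact hcol j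
  refine ⟨?_, ?_, ?_⟩
  · -- off-diagonal nonnegativity
    intro i j hij
    rw [entry]
    by_cases hc : (i = 0 ∧ j = 1) ∨ (i = 1 ∧ j = 0)
    · rcases hc with ⟨hi, hj⟩ | ⟨hi, hj⟩ <;> subst hi <;> subst hj
      · rw [h12, h21]
        have := hoff 0 1 hij; linarith
      · rw [h21, h12]
        have := hoff 1 0 hij; linarith
    · push_neg at hc
      have hWst : Wst i j = W i j := by
        apply hother
        rintro (h | h | ⟨h1', h2'⟩ | ⟨h1', h2'⟩)
        · exact hc.1 h.1 h.2
        · exact hc.2 h.1 h.2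
        · exact hij (h1'.trans h2'.symm)
        · exact hij (h1'.trans h2'.symm)
      rw [hWst]
      have hji : 0 ≤ Wst j i := by
        by_cases hd : (j = 0 ∧ i = 1) ∨ (j = 1 ∧ i = 0)
        · rcases hd with ⟨hj', hi'⟩ | ⟨hj', hi'⟩ <;> subst hj' <;> subst hi' <;>
            simp [h12, h21]
        · push_neg at hd
          have : Wst j i = W j i := by
            apply hother
            rintro (h | h | ⟨h1', h2'⟩ | ⟨h1', h2'⟩)
            · exact hd.1 h.1 h.2
            · exact hd.2 h.1 h.2
            · exact hij (h2'.trans h1'.symm)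
            · exact hij (h2'.trans h1'.symm)
          rw [this]; exact hoff j i (Ne.symm hij)
      have h1 : 0 ≤ pst i * Wst j i * (pst j)⁻¹ :=
        mul_nonneg (mul_nonneg (hpst i).le hji) (inv_nonneg.2 (hpst j).le)
      linarith
  · -- zero column sums
    intro j
    have hrow : ∑ i : Fin (m + 3), Wst j i * pst i = 0 := by
      have := congrFun hsteady j
      simpa [Matrix.mulVec, dotProduct] using this
    simp only [entry]
    rw [Finset.sum_add_distrib, Finset.sum_sub_distrib, hcol j, hcolst j]
    have : ∑ i : Fin (m + 3), pst i * Wst j i * (pst j)⁻¹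
        = (∑ i : Fin (m + 3), Wst j i * pst i) * (pst j)⁻¹ := by
      rw [Finset.sum_mul]
      exact Finset.sum_congr rfl fun i _ => by ring
    rw [this, hrow]
    ring
  · -- diagonal
    intro i
    rw [entry]
    have : pst i * Wst i i * (pst i)⁻¹ = Wst i i := by
      rw [mul_comm (pst i) (Wst i i), mul_assoc, mul_inv_cancel₀ (hpst i).ne', mul_one]
    rw [this]; ring
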